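/- An A-invariant subspace W of V is nice if and only if for all weights α_i, α_j ∈ Δ(W) such that α_j − α_i ∈ Δ(𝔤), one has π(𝔤_γ)W_{α_i} ⊥ W, where γ = α_j − α_i. -/

import Mathlib

open scoped InnerProductSpace
open Finset
open scoped Classical

/-- The (restricted) moment map of a linear family of operators `π` on an inner
product space `V`: `momentMap π v` is the unique element of `E` with
`⟪momentMap π v, Y⟫ = ⟪π Y v, v⟫ / ‖v‖²` for all `Y`. -/
noncomputable def momentMap {E V : Type*} [NormedAddCommGroup E] [InnerProductSpace ℝ E]
    [FiniteDimensional ℝ E] [NormedAddCommGroup V] [InnerProductSpace ℝ V]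
    (π : E →ₗ[ℝ] V →L[ℝ] V) (v : V) : E :=
  (InnerProductSpace.toDual ℝ E).symm <| LinearMap.toContinuousLinearMap
    { toFun := fun X => ⟪(π X) v, v⟫_ℝ / ‖v‖ ^ 2
      map_add' := fun X Y => by
        simp [map_add, ContinuousLinearMap.add_apply, inner_add_left, add_div]
      map_smul' := fun c X => by
        simp [map_smul, ContinuousLinearMap.smul_apply, inner_smul_left, mul_div_assoc] }

/-- The weight space `V_α = {v : ∀ X ∈ 𝔞, π(X)v = ⟪α,X⟫v}`. -/
def wtSpace {E V : Type*} [NormedAddCommGroup E] [InnerProductSpace ℝ E]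
    [NormedAddCommGroup V] [InnerProductSpace ℝ V]
    (π : E →ₗ[ℝ] V →L[ℝ] V) (𝔞 : Submodule ℝ E) (α : E) : Submodule ℝ V where
  carrier := {v | ∀ X ∈ 𝔞, (π X) v = ⟪α, X⟫_ℝ • v}
  add_mem' := fun {a b} ha hb X hX => by rw [map_add, ha X hX, hb X hX, smul_add]
  zero_mem' := fun X hX => by simp
  smul_mem' := fun t a ha X hX => by rw [map_smul, ha X hX, smul_comm]

/-- The (restricted) root space `𝔤_γ = {Y : ∀ X ∈ 𝔞, [X,Y] = ⟪γ,X⟫Y}`. -/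
def rootSpace {E : Type*} [NormedAddCommGroup E] [InnerProductSpace ℝ E]
    (bk : E →ₗ[ℝ] E →ₗ[ℝ] E) (𝔞 : Submodule ℝ E) (γ : E) : Submodule ℝ E where
  carrier := {Y | ∀ X ∈ 𝔞, bk X Y = ⟪γ, X⟫_ℝ • Y}
  add_mem' := fun {a b} ha hb X hX => by rw [map_add, ha X hX, hb X hX, smul_add]
  zero_mem' := fun X hX => by simp
  smul_mem' := fun t a ha X hX => by rw [map_smul, ha X hX, smul_comm]

/-- A subspace `W ⊆ V` is `A`-invariant if `π(X)W ⊆ W` for all `X ∈ 𝔞`. -/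
def AInvariant {E V : Type*} [NormedAddCommGroup E] [InnerProductSpace ℝ E]
    [NormedAddCommGroup V] [InnerProductSpace ℝ V]
    (π : E →ₗ[ℝ] V →L[ℝ] V) (𝔞 : Submodule ℝ E) (W : Submodule ℝ V) : Prop :=
  ∀ X ∈ 𝔞, ∀ w ∈ W, (π X) w ∈ W

/-- An `A`-invariant subspace `W ⊆ V` is a nice space if `momentMap π w ∈ 𝔞` for
every nonzero `w ∈ W`. -/
def IsNiceSpace {E V : Type*} [NormedAddCommGroup E] [InnerProductSpace ℝ E]
    [FiniteDimensional ℝ E] [NormedAddCommGroup V] [InnerProductSpace ℝ V]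
    (π : E →ₗ[ℝ] V →L[ℝ] V) (𝔞 : Submodule ℝ E) (W : Submodule ℝ V) : Prop :=
  AInvariant π 𝔞 W ∧ ∀ w ∈ W, w ≠ 0 → momentMap π w ∈ 𝔞

section Aux

variable {𝔤 V : Type*} [NormedAddCommGroup 𝔤] [InnerProductSpace ℝ 𝔤] [FiniteDimensional ℝ 𝔤]
  [NormedAddCommGroup V] [InnerProductSpace ℝ V] [FiniteDimensional ℝ V]

lemma mem_wtSpace_iff (π : 𝔤 →ₗ[ℝ] V →L[ℝ] V) (𝔞 : Submodule ℝ 𝔤) (α : 𝔤) (v : V) :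
    v ∈ wtSpace π 𝔞 α ↔ ∀ X ∈ 𝔞, (π X) v = ⟪α, X⟫_ℝ • v := Iff.rfl

lemma mem_rootSpace_iff (bk : 𝔤 →ₗ[ℝ] 𝔤 →ₗ[ℝ] 𝔤) (𝔞 : Submodule ℝ 𝔤) (γ Y : 𝔤) :
    Y ∈ rootSpace bk 𝔞 γ ↔ ∀ X ∈ 𝔞, bk X Y = ⟪γ, X⟫_ℝ • Y := Iff.rfl

lemma momentMap_inner (π : 𝔤 →ₗ[ℝ] V →L[ℝ] V) (v : V) (Y : 𝔤) :
    ⟪momentMap π v, Y⟫_ℝ = ⟪(π Y) v, v⟫_ℝ / ‖v‖ ^ 2 := by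
  simp [momentMap, InnerProductSpace.toDual_symm_apply]

/-- Weight vectors for distinct weights (in `𝔞`) are orthogonal. -/
lemma wt_orth (π : 𝔤 →ₗ[ℝ] V →L[ℝ] V) (𝔞 : Submodule ℝ 𝔤)
    (hsa : ∀ X ∈ 𝔞, ∀ v w : V, ⟪(π X) v, w⟫_ℝ = ⟪v, (π X) w⟫_ℝ)
    {α β : 𝔤} (hα : α ∈ 𝔞) (hβ : β ∈ 𝔞) (hne : α ≠ β)
    {u v : V} (hu : u ∈ wtSpace π 𝔞 α) (hv : v ∈ wtSpace π 𝔞 β) :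
    ⟪u, v⟫_ℝ = 0 := by
  have hX : α - β ∈ 𝔞 := sub_mem hα hβ
  have h1 := hsa (α - β) hX u v
  rw [hu (α - β) hX, hv (α - β) hX, real_inner_smul_left, real_inner_smul_right] at h1
  have hne' : ⟪α, α - β⟫_ℝ - ⟪β, α - β⟫_ℝ ≠ 0 := by
    rw [← inner_sub_left]
    exact inner_self_ne_zero.2 (sub_ne_zero.2 hne)
  have h2 : (⟪α, α - β⟫_ℝ - ⟪β, α - β⟫_ℝ) * ⟪u, v⟫_ℝ = 0 := by ring_nf; linarith
  rcases mul_eq_zero.1 h2 with h | h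
  · exact absurd h hne'
  · exact h

/-- `π(𝔤_γ)` maps `V_α` into `V_{α+γ}`. -/
lemma mapsTo_wt (bk : 𝔤 →ₗ[ℝ] 𝔤 →ₗ[ℝ] 𝔤) (π : 𝔤 →ₗ[ℝ] V →L[ℝ] V)
    (hrep : ∀ X Y : 𝔤, π (bk X Y) = π X * π Y - π Y * π X)
    (𝔞 : Submodule ℝ 𝔤) {γ α Y} {v : V}
    (hY : Y ∈ rootSpace bk 𝔞 γ) (hv : v ∈ wtSpace π 𝔞 α) :
    (π Y) v ∈ wtSpace π 𝔞 (α + γ) := by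
  intro X hX
  have h1 : (π X) ((π Y) v) = (π (bk X Y)) v + (π Y) ((π X) v) := by
    rw [hrep X Y]; simp [ContinuousLinearMap.sub_apply, ContinuousLinearMap.mul_apply]
  rw [h1, hY X hX, hv X hX, map_smul, map_smul, inner_add_left, add_smul]
  simp [ContinuousLinearMap.smul_apply, add_comm]

/-- Any vector decomposes as a sum of weight vectors. -/
lemma exists_decomp (π : 𝔤 →ₗ[ℝ] V →L[ℝ] V) (𝔞 : Submodule ℝ 𝔤) (ΔV : Finset 𝔤)
    (hVdec : (⨆ α ∈ ΔV, wtSpace π 𝔞 α) = ⊤) (v : V) :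
    ∃ f : 𝔤 → V, (∀ δ ∈ ΔV, f δ ∈ wtSpace π 𝔞 δ) ∧ v = ∑ δ ∈ ΔV, f δ := by
  let M : Submodule ℝ V :=
    { carrier := {v | ∃ f : 𝔤 → V, (∀ δ ∈ ΔV, f δ ∈ wtSpace π 𝔞 δ) ∧ v = ∑ δ ∈ ΔV, f δ}
      add_mem' := by
        rintro a b ⟨f, hf, rfl⟩ ⟨g, hg, rfl⟩
        exact ⟨f + g, fun δ hδ => add_mem (hf δ hδ) (hg δ hδ), by simp [Finset.sum_add_distrib]⟩
      zero_mem' := ⟨0, fun δ hδ => zero_mem _, by simp⟩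
      smul_mem' := by
        rintro c a ⟨f, hf, rfl⟩
        exact ⟨c • f, fun δ hδ => Submodule.smul_mem _ _ (hf δ hδ),
          by simp [Finset.smul_sum]⟩ }
  have hle : (⨆ α ∈ ΔV, wtSpace π 𝔞 α) ≤ M := by
    refine iSup_le fun α => iSup_le fun hα => ?_
    intro x hx
    refine ⟨fun δ => if δ = α then x else 0, fun δ hδ => ?_, ?_⟩
    · by_cases h : δ = α
      · subst h; simpa using hx
      · simp [h]
    · rw [Finset.sum_ite_eq' ΔV α (fun _ => x), if_pos hα]
  exact hle (hVdec ▸ Submodule.mem_top)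

/-- Components of an element of an `A`-invariant subspace lie in the subspace. -/
lemma comp_mem (π : 𝔤 →ₗ[ℝ] V →L[ℝ] V) (𝔞 : Submodule ℝ 𝔤) (ΔV : Finset 𝔤)
    (hΔV : ∀ α ∈ ΔV, α ∈ 𝔞) (W : Submodule ℝ V) (hW : AInvariant π 𝔞 W)
    (f : 𝔤 → V) (hf : ∀ δ ∈ ΔV, f δ ∈ wtSpace π 𝔞 δ)
    (hsum : (∑ δ ∈ ΔV, f δ) ∈ W) : ∀ α ∈ ΔV, f α ∈ W := by
  intro α hα
  set L : 𝔤 → (V →ₗ[ℝ] V) := fun β =>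
    (‖α - β‖ ^ 2)⁻¹ • (((π (α - β)) : V →ₗ[ℝ] V) - ⟪β, α - β⟫_ℝ • LinearMap.id) with hL
  set c : 𝔤 → 𝔤 → ℝ := fun δ β =>
    (‖α - β‖ ^ 2)⁻¹ * (⟪δ, α - β⟫_ℝ - ⟪β, α - β⟫_ℝ) with hc
  have hLW : ∀ β ∈ ΔV, ∀ v ∈ W, L β v ∈ W := by
    intro β hβ v hv
    refine Submodule.smul_mem _ _ (Submodule.sub_mem _ ?_ (Submodule.smul_mem _ _ hv))
    exact hW (α - β) (sub_mem (hΔV α hα) (hΔV β hβ)) v hv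
  have hLe : ∀ β ∈ ΔV, ∀ δ ∈ ΔV, L β (f δ) = c δ β • f δ := by
    intro β hβ δ hδ
    have hδ' := hf δ hδ (α - β) (sub_mem (hΔV α hα) (hΔV β hβ))
    simp only [hL, hc, LinearMap.smul_apply, LinearMap.sub_apply,
      ContinuousLinearMap.coe_coe, LinearMap.id_apply]
    rw [hδ', ← sub_smul, smul_smul]
  have key : ∀ l : List 𝔤, (∀ β ∈ l, β ∈ ΔV) →
      (∀ v ∈ W, (l.map L).prod v ∈ W) ∧
      (∀ δ ∈ ΔV, (l.map L).prod (f δ) = (l.map (c δ)).prod • f δ) := by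
    intro l
    induction l with
    | nil => exact fun _ => ⟨fun v hv => by simpa using hv, fun δ _ => by simp⟩
    | cons β l ih =>
      intro hmem
      obtain ⟨ih1, ih2⟩ := ih fun x hx => hmem x (List.mem_cons_of_mem _ hx)
      have hβ : β ∈ ΔV := hmem β List.mem_cons_self
      constructor
      · intro v hv
        simp only [List.map_cons, List.prod_cons, Module.End.mul_apply]
        exact hLW β hβ _ (ih1 v hv)
      · intro δ hδ
        simp only [List.map_cons, List.prod_cons, Module.End.mul_apply]
        rw [ih2 δ hδ, map_smul, hLe β hβ δ hδ, smul_smul, mul_comm]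
  obtain ⟨k1, k2⟩ := key (ΔV.erase α).toList
    (fun β hβ => (Finset.mem_erase.1 (Finset.mem_toList.1 hβ)).2)
  have hval : (((ΔV.erase α).toList.map L).prod) (∑ δ ∈ ΔV, f δ) = f α := by
    rw [map_sum]
    have hterm : ∀ δ ∈ ΔV, (((ΔV.erase α).toList.map L).prod) (f δ)
        = if δ = α then f δ else 0 := by
      intro δ hδ
      rw [k2 δ hδ]
      by_cases h : δ = α
      · subst h
        rw [if_pos rfl]
        have hone : ((ΔV.erase δ).toList.map (c δ)).prod = 1 := by
          apply List.prod_eq_one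
          intro x hx
          obtain ⟨β, hβ, rfl⟩ := List.mem_map.1 hx
          have hβne : β ≠ δ := (Finset.mem_erase.1 (Finset.mem_toList.1 hβ)).1
          have hδβ : δ - β ≠ 0 := sub_ne_zero.2 (Ne.symm hβne)
          have hn : ‖δ - β‖ ^ 2 ≠ 0 := pow_ne_zero _ (norm_ne_zero_iff.2 hδβ)
          simp only [hc]
          rw [← inner_sub_left, real_inner_self_eq_norm_sq]
          exact inv_mul_cancel₀ hn
        rw [hone, one_smul]
      · rw [if_neg h]
        have hmem0 : (0 : ℝ) ∈ (ΔV.erase α).toList.map (c δ) := by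
          refine List.mem_map.2 ⟨δ, Finset.mem_toList.2 (Finset.mem_erase.2 ⟨h, hδ⟩), ?_⟩
          simp [hc]
        rw [List.prod_eq_zero hmem0, zero_smul]
    rw [Finset.sum_congr rfl hterm, Finset.sum_ite_eq' ΔV α f, if_pos hα]
  have := k1 _ hsum
  rwa [hval] at this

/-- Decomposition of an element of `W` into weight components inside `W`. -/
lemma decomp_in_W (π : 𝔤 →ₗ[ℝ] V →L[ℝ] V) (𝔞 : Submodule ℝ 𝔤) (ΔV : Finset 𝔤)
    (hΔV : ∀ α ∈ ΔV, α ∈ 𝔞) (hVdec : (⨆ α ∈ ΔV, wtSpace π 𝔞 α) = ⊤)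
    (W : Submodule ℝ V) (hW : AInvariant π 𝔞 W) {w : V} (hw : w ∈ W) :
    ∃ f : 𝔤 → V, (∀ δ ∈ ΔV, f δ ∈ W ⊓ wtSpace π 𝔞 δ) ∧ w = ∑ δ ∈ ΔV, f δ := by
  obtain ⟨f, hf, rfl⟩ := exists_decomp π 𝔞 ΔV hVdec w
  exact ⟨f, fun δ hδ => Submodule.mem_inf.2
    ⟨comp_mem π 𝔞 ΔV hΔV W hW f hf hw δ hδ, hf δ hδ⟩, rfl⟩

end Aux

/-- an `A`-invariant subspace `W` is nice iff for all weights
`α_i, α_j ∈ Δ(W)` with `γ = α_j − α_i ∈ Δ(𝔤)` one has `π(𝔤_γ)W_{α_i} ⊥ W`. -/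
theorem isNice_iff_orthogonality
    {𝔤 V : Type*} [NormedAddCommGroup 𝔤] [InnerProductSpace ℝ 𝔤] [FiniteDimensional ℝ 𝔤]
    [NormedAddCommGroup V] [InnerProductSpace ℝ V] [FiniteDimensional ℝ V]
    -- the Lie bracket of `𝔤` and the representation `π : 𝔤 → 𝔤𝔩(V)`:
    (bk : 𝔤 →ₗ[ℝ] 𝔤 →ₗ[ℝ] 𝔤)
    (hbk_alt : ∀ X : 𝔤, bk X X = 0)
    (hbk_jac : ∀ X Y Z : 𝔤, bk X (bk Y Z) + bk Y (bk Z X) + bk Z (bk X Y) = 0)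
    (π : 𝔤 →ₗ[ℝ] V →L[ℝ] V)
    (hrep : ∀ X Y : 𝔤, π (bk X Y) = π X * π Y - π Y * π X)
    -- `𝔞` is an abelian subalgebra acting by self-adjoint operators:
    (𝔞 : Submodule ℝ 𝔤)
    (hab : ∀ X ∈ 𝔞, ∀ Y ∈ 𝔞, bk X Y = 0)
    (hsa : ∀ X ∈ 𝔞, ∀ v w : V, ⟪(π X) v, w⟫_ℝ = ⟪v, (π X) w⟫_ℝ)
    -- roots and weights:
    (Δ𝔤 : Finset 𝔤) (hΔ𝔤 : ∀ γ ∈ Δ𝔤, γ ∈ 𝔞 ∧ γ ≠ 0)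
    (ΔV : Finset 𝔤) (hΔV : ∀ α ∈ ΔV, α ∈ 𝔞)
    -- `𝔤₀ = 𝔞 ⊕ 𝔪` is the centralizer of `𝔞`, `π` is skew-adjoint on `𝔪`:
    (𝔪 : Submodule ℝ 𝔤)
    (hskew : ∀ Y ∈ 𝔪, ∀ v w : V, ⟪(π Y) v, w⟫_ℝ = -⟪v, (π Y) w⟫_ℝ)
    (h𝔞𝔪 : ∀ X ∈ 𝔞, ∀ Y ∈ 𝔪, ⟪X, Y⟫_ℝ = 0)
    (h𝔤₀ : ∀ Z : 𝔤, (∀ X ∈ 𝔞, bk X Z = 0) ↔ Z ∈ 𝔞 ⊔ 𝔪)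
    -- the orthogonal restricted-root space decomposition of `𝔤`:
    (h𝔤dec : (𝔞 ⊔ 𝔪) ⊔ (⨆ γ ∈ Δ𝔤, rootSpace bk 𝔞 γ) = ⊤)
    (h𝔤orth : ∀ γ ∈ Δ𝔤, ∀ Y ∈ rootSpace bk 𝔞 γ, ∀ Z : 𝔤,
      (Z ∈ 𝔞 ⊔ 𝔪 ∨ ∃ γ' ∈ Δ𝔤, γ' ≠ γ ∧ Z ∈ rootSpace bk 𝔞 γ') → ⟪Y, Z⟫_ℝ = 0)
    -- the weight space decomposition of `V`:
    (hVdec : (⨆ α ∈ ΔV, wtSpace π 𝔞 α) = ⊤)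
    (W : Submodule ℝ V) (hWinv : AInvariant π 𝔞 W)
    :
    (∀ w ∈ W, w ≠ 0 → momentMap π w ∈ 𝔞) ↔
      (∀ αi ∈ ΔV, ∀ αj ∈ ΔV, W ⊓ wtSpace π 𝔞 αi ≠ ⊥ → W ⊓ wtSpace π 𝔞 αj ≠ ⊥ →
        αj - αi ∈ Δ𝔤 →
        ∀ Y ∈ rootSpace bk 𝔞 (αj - αi), ∀ u ∈ W ⊓ wtSpace π 𝔞 αi, ∀ z ∈ W,
          ⟪(π Y) u, z⟫_ℝ = 0) := by
  constructor
  · -- niceness implies orthogonality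
    intro h αi hαi αj hαj _ _ hγΔ Y hY u hu z hz
    obtain ⟨huW, huwt⟩ := Submodule.mem_inf.1 hu
    obtain ⟨hγ𝔞, hγ0⟩ := hΔ𝔤 _ hγΔ
    have hij : αi ≠ αj := fun hEq => hγ0 (by rw [hEq, sub_self])
    have hzero : ∀ w ∈ W, ⟪(π Y) w, w⟫_ℝ = 0 := by
      intro w hw
      rcases eq_or_ne w 0 with rfl | hw0
      · simp
      · have hm := h w hw hw0
        have h1 : ⟪momentMap π w, Y⟫_ℝ = 0 := by
          rw [real_inner_comm]
          exact h𝔤orth _ hγΔ Y hY _ (Or.inl (Submodule.mem_sup_left hm))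
        rw [momentMap_inner, div_eq_zero_iff] at h1
        rcases h1 with h1 | h1
        · exact h1
        · exact absurd h1 (pow_ne_zero _ (norm_ne_zero_iff.2 hw0))
    obtain ⟨f, hf, rfl⟩ := decomp_in_W π 𝔞 ΔV hΔV hVdec W hWinv hz
    have hαj𝔞 := hΔV αj hαj
    have hαi𝔞 := hΔV αi hαi
    have hYu : (π Y) u ∈ wtSpace π 𝔞 αj := by
      have h1 := mapsTo_wt bk π hrep 𝔞 hY huwt
      have h2 : αi + (αj - αi) = αj := by abel
      rwa [h2] at h1
    rw [inner_sum]
    refine Finset.sum_eq_zero fun δ hδ => ?_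
    obtain ⟨hfW, hfwt⟩ := Submodule.mem_inf.1 (hf δ hδ)
    by_cases hcase : δ = αj
    · subst hcase
      have h0 := hzero _ (add_mem huW hfW)
      have hYf : (π Y) (f δ) ∈ wtSpace π 𝔞 (δ + (δ - αi)) :=
        mapsTo_wt bk π hrep 𝔞 hY hfwt
      rw [map_add, inner_add_left, inner_add_right, inner_add_right] at h0
      have t1 : ⟪(π Y) u, u⟫_ℝ = 0 :=
        wt_orth π 𝔞 hsa (hΔV _ hδ) hαi𝔞 (Ne.symm hij) hYu huwt
      have hne2 : δ + (δ - αi) ≠ αi := by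
        intro hEq
        apply hγ0
        have h2 : (δ - αi) + (δ - αi) = 0 := by
          calc (δ - αi) + (δ - αi) = δ + (δ - αi) - αi := by abel
            _ = αi - αi := by rw [hEq]
            _ = 0 := sub_self αi
        have h3 : (2 : ℝ) • (δ - αi) = 0 := by rw [two_smul]; exact h2
        exact (smul_eq_zero.1 h3).resolve_left (by norm_num)
      have t3 : ⟪(π Y) (f δ), u⟫_ℝ = 0 :=
        wt_orth π 𝔞 hsa (add_mem (hΔV _ hδ) hγ𝔞) hαi𝔞 hne2 hYf huwt
      have hne3 : δ + (δ - αi) ≠ δ := by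
        intro hEq
        exact hγ0 (add_eq_left.1 hEq)
      have t4 : ⟪(π Y) (f δ), f δ⟫_ℝ = 0 :=
        wt_orth π 𝔞 hsa (add_mem (hΔV _ hδ) hγ𝔞) (hΔV _ hδ) hne3 hYf hfwt
      linarith
    · exact wt_orth π 𝔞 hsa hαj𝔞 (hΔV δ hδ) (Ne.symm hcase) hYu hfwt
  · -- orthogonality implies niceness
    intro h w hw hw0
    have hKroot : ∀ γ ∈ Δ𝔤, ∀ Y ∈ rootSpace bk 𝔞 γ, ⟪(π Y) w, w⟫_ℝ = 0 := by
      intro γ hγ Y hY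
      obtain ⟨hγ𝔞, hγ0⟩ := hΔ𝔤 γ hγ
      obtain ⟨f, hf, hw_eq⟩ := decomp_in_W π 𝔞 ΔV hΔV hVdec W hWinv hw
      rw [hw_eq, map_sum, sum_inner]
      refine Finset.sum_eq_zero fun δ hδ => ?_
      rw [inner_sum]
      refine Finset.sum_eq_zero fun ε hε => ?_
      obtain ⟨hfδW, hfδwt⟩ := Submodule.mem_inf.1 (hf δ hδ)
      obtain ⟨hfεW, hfεwt⟩ := Submodule.mem_inf.1 (hf ε hε)
      have hYf : (π Y) (f δ) ∈ wtSpace π 𝔞 (δ + γ) := mapsTo_wt bk π hrep 𝔞 hY hfδwt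
      by_cases hcase : δ + γ = ε
      · rcases eq_or_ne (f δ) 0 with h0 | h0
        · simp [h0]
        rcases eq_or_ne (f ε) 0 with h1 | h1
        · simp [h1]
        have hne_i : W ⊓ wtSpace π 𝔞 δ ≠ ⊥ :=
          Submodule.ne_bot_iff _ |>.2 ⟨f δ, hf δ hδ, h0⟩
        have hne_j : W ⊓ wtSpace π 𝔞 ε ≠ ⊥ :=
          Submodule.ne_bot_iff _ |>.2 ⟨f ε, hf ε hε, h1⟩
        have hεδ : ε - δ = γ := by rw [← hcase]; abel
        have hroot : ε - δ ∈ Δ𝔤 := by rw [hεδ]; exact hγ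
        have hYmem : Y ∈ rootSpace bk 𝔞 (ε - δ) := by rw [hεδ]; exact hY
        exact h δ hδ ε hε hne_i hne_j hroot Y hYmem (f δ) (hf δ hδ) (f ε) hfεW
      · exact wt_orth π 𝔞 hsa (add_mem (hΔV δ hδ) hγ𝔞) (hΔV ε hε) hcase hYf hfεwt
    have hK𝔪 : ∀ Y ∈ 𝔪, ⟪(π Y) w, w⟫_ℝ = 0 := by
      intro Y hY
      have h1 := hskew Y hY w w
      have h2 : ⟪w, (π Y) w⟫_ℝ = ⟪(π Y) w, w⟫_ℝ := real_inner_comm _ _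
      linarith
    have key : ∀ x : 𝔤, (∀ Y ∈ 𝔪, ⟪x, Y⟫_ℝ = 0) →
        (∀ γ ∈ Δ𝔤, ∀ Y ∈ rootSpace bk 𝔞 γ, ⟪x, Y⟫_ℝ = 0) →
        ∀ t ∈ 𝔪 ⊔ (⨆ γ ∈ Δ𝔤, rootSpace bk 𝔞 γ), ⟪x, t⟫_ℝ = 0 := by
      intro x h1 h2 t ht
      have hle : 𝔪 ⊔ (⨆ γ ∈ Δ𝔤, rootSpace bk 𝔞 γ) ≤ LinearMap.ker (innerSL ℝ x : 𝔤 →ₗ[ℝ] ℝ) := by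
        refine sup_le ?_ (iSup_le fun γ => iSup_le fun hγ => ?_)
        · intro Y hY
          exact LinearMap.mem_ker.2 (by simpa using h1 Y hY)
        · intro Y hY
          exact LinearMap.mem_ker.2 (by simpa using h2 γ hγ Y hY)
      simpa using hle ht
    have hm_perp : ∀ t ∈ 𝔪 ⊔ (⨆ γ ∈ Δ𝔤, rootSpace bk 𝔞 γ), ⟪momentMap π w, t⟫_ℝ = 0 := by
      refine key _ ?_ ?_
      · intro Y hY; rw [momentMap_inner, hK𝔪 Y hY, zero_div]
      · intro γ hγ Y hY; rw [momentMap_inner, hKroot γ hγ Y hY, zero_div]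
    have htop : 𝔞 ⊔ (𝔪 ⊔ (⨆ γ ∈ Δ𝔤, rootSpace bk 𝔞 γ)) = ⊤ := by
      rw [← sup_assoc]; exact h𝔤dec
    have hmem : momentMap π w ∈ 𝔞 ⊔ (𝔪 ⊔ (⨆ γ ∈ Δ𝔤, rootSpace bk 𝔞 γ)) := by
      rw [htop]; exact Submodule.mem_top
    obtain ⟨a, ha, s, hs, has⟩ := Submodule.mem_sup.1 hmem
    have ha_perp : ∀ t ∈ 𝔪 ⊔ (⨆ γ ∈ Δ𝔤, rootSpace bk 𝔞 γ), ⟪a, t⟫_ℝ = 0 := by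
      refine key a (fun Y hY => h𝔞𝔪 a ha Y hY) ?_
      intro γ hγ Y hY
      rw [real_inner_comm]
      exact h𝔤orth γ hγ Y hY a (Or.inl (Submodule.mem_sup_left ha))
    have hs0 : s = 0 := by
      have h1 : ⟪momentMap π w, s⟫_ℝ = 0 := hm_perp s hs
      have h2 : ⟪a, s⟫_ℝ = 0 := ha_perp s hs
      rw [← has, inner_add_left, h2, zero_add] at h1
      exact inner_self_eq_zero.1 h1
    have : momentMap π w = a := by rw [← has, hs0, add_zero]
    rw [this]; exact ha
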